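/- For a proper subdomain G of R^n, a parameter p ≥ 1, and points z1, z2 in G, the Barrlund distance satisfies s_G(z1,z2) ≤ b_{G,p}(z1,z2) ≤ 2^{1-1/p} · s_G(z1,z2), where s_G is the triangular ratio metric. -/
import Mathlib


open Set

/-- Barrlund distance with parameter `p` in a domain `G`. -/
noncomputable def barrlund {n : ℕ} (G : Set (EuclideanSpace ℝ (Fin n))) (p : ℝ)
    (x y : EuclideanSpace ℝ (Fin n)) : ℝ :=
  sSup ((fun z => dist x y / (dist x z ^ p + dist z y ^ p) ^ (1 / p)) '' frontier G)

/-- Triangular ratio metric in a domain `G`. -/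
noncomputable def triRatio {n : ℕ} (G : Set (EuclideanSpace ℝ (Fin n)))
    (x y : EuclideanSpace ℝ (Fin n)) : ℝ :=
  sSup ((fun z => dist x y / (dist x z + dist z y)) '' frontier G)

private lemma real_rpow_add_rpow_le_add {a b p : ℝ} (ha : 0 ≤ a) (hb : 0 ≤ b) (hp : 1 ≤ p) :
    (a ^ p + b ^ p) ^ (1 / p) ≤ a + b := by
  lift a to NNReal using ha
  lift b to NNReal using hb
  have := NNReal.rpow_add_rpow_le_add a b hp
  have h2 : ((a ^ p + b ^ p) ^ (1 / p) : NNReal) ≤ a + b := this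
  calc ((a : ℝ) ^ p + (b : ℝ) ^ p) ^ (1 / p)
      = (((a ^ p + b ^ p) ^ (1 / p) : NNReal) : ℝ) := by
        push_cast [NNReal.coe_rpow]; ring_nf
    _ ≤ ((a + b : NNReal) : ℝ) := by exact_mod_cast h2
    _ = a + b := by push_cast; ring

private lemma real_add_le_mul_rpow {a b p : ℝ} (ha : 0 ≤ a) (hb : 0 ≤ b) (hp : 1 ≤ p) :
    a + b ≤ 2 ^ (1 - 1 / p) * (a ^ p + b ^ p) ^ (1 / p) := by
  have hp0 : 0 < p := lt_of_lt_of_le one_pos hp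
  lift a to NNReal using ha
  lift b to NNReal using hb
  have h := NNReal.rpow_add_le_mul_rpow_add_rpow a b hp
  have h2 : ((a + b) ^ p) ^ (1 / p) ≤ (((2 : NNReal) ^ (p - 1)) * (a ^ p + b ^ p)) ^ (1 / p) :=
    NNReal.rpow_le_rpow h (by positivity)
  rw [← NNReal.rpow_mul, mul_one_div, div_self hp0.ne', NNReal.rpow_one,
    NNReal.mul_rpow, ← NNReal.rpow_mul] at h2
  have hexp : (p - 1) * (1 / p) = 1 - 1 / p := by field_simp
  rw [hexp] at h2
  have h3 : ((a + b : NNReal) : ℝ) ≤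
      (((2 : NNReal) ^ (1 - 1/p) * (a ^ p + b ^ p) ^ (1 / p) : NNReal) : ℝ) := by
    exact_mod_cast h2
  calc (a : ℝ) + b = ((a + b : NNReal) : ℝ) := by push_cast; ring
    _ ≤ (((2 : NNReal) ^ (1 - 1/p) * (a ^ p + b ^ p) ^ (1 / p) : NNReal) : ℝ) := h3
    _ = 2 ^ (1 - 1 / p) * ((a : ℝ) ^ p + (b : ℝ) ^ p) ^ (1 / p) := by
        push_cast [NNReal.coe_rpow]; ring_nf

theorem stmt0 {n : ℕ} (G : Set (EuclideanSpace ℝ (Fin n)))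
    (hG : IsOpen G) (hGc : IsConnected G) (hGne : G ≠ univ)
    (p : ℝ) (hp : 1 ≤ p) (z1 z2 : EuclideanSpace ℝ (Fin n))
    (hz1 : z1 ∈ G) (hz2 : z2 ∈ G) :
    triRatio G z1 z2 ≤ barrlund G p z1 z2 ∧
      barrlund G p z1 z2 ≤ 2 ^ (1 - 1 / p) * triRatio G z1 z2 := by
  have hp0 : 0 < p := lt_of_lt_of_le one_pos hp
  set f : EuclideanSpace ℝ (Fin n) → ℝ := fun z => dist z1 z2 / (dist z1 z + dist z z2)
  set g : EuclideanSpace ℝ (Fin n) → ℝ :=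
    fun z => dist z1 z2 / (dist z1 z ^ p + dist z z2 ^ p) ^ (1 / p)
  have hF : (frontier G).Nonempty :=
    nonempty_frontier_iff.mpr ⟨⟨z1, hz1⟩, hGne⟩
  -- basic facts for z ∈ frontier G
  have key : ∀ z ∈ frontier G, 0 < dist z1 z ∧ 0 < dist z z2 := by
    intro z hz
    have hzG : z ∉ G := by
      rw [hG.frontier_eq] at hz; exact hz.2
    constructor
    · rw [dist_pos]; rintro rfl; exact hzG hz1
    · rw [dist_pos]; rintro rfl; exact hzG hz2
  have hpt1 : ∀ z ∈ frontier G, f z ≤ g z := by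
    intro z hz
    obtain ⟨ha, hb⟩ := key z hz
    have hD : (0:ℝ) < (dist z1 z ^ p + dist z z2 ^ p) ^ (1 / p) := by positivity
    exact div_le_div_of_nonneg_left dist_nonneg hD
      (real_rpow_add_rpow_le_add ha.le hb.le hp) |>.trans_eq rfl
  have hpt2 : ∀ z ∈ frontier G, g z ≤ 2 ^ (1 - 1 / p) * f z := by
    intro z hz
    obtain ⟨ha, hb⟩ := key z hz
    have hD : (0:ℝ) < (dist z1 z ^ p + dist z z2 ^ p) ^ (1 / p) := by positivity
    have hab : (0:ℝ) < dist z1 z + dist z z2 := by positivity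
    rw [mul_div_assoc']
    rw [div_le_div_iff₀ hD hab]
    have := real_add_le_mul_rpow ha.le hb.le hp
    calc dist z1 z2 * (dist z1 z + dist z z2)
        ≤ dist z1 z2 * (2 ^ (1 - 1 / p) * (dist z1 z ^ p + dist z z2 ^ p) ^ (1 / p)) :=
          mul_le_mul_of_nonneg_left this dist_nonneg
      _ = 2 ^ (1 - 1 / p) * dist z1 z2 * (dist z1 z ^ p + dist z z2 ^ p) ^ (1 / p) := by ring
  have hf1 : ∀ z ∈ frontier G, f z ≤ 1 := by
    intro z hz
    obtain ⟨ha, hb⟩ := key z hz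
    rw [div_le_one (by positivity)]
    exact dist_triangle z1 z z2
  have hbddf : BddAbove (f '' frontier G) := by
    refine ⟨1, ?_⟩
    rintro y ⟨z, hz, rfl⟩
    exact hf1 z hz
  have hbddg : BddAbove (g '' frontier G) := by
    refine ⟨2 ^ (1 - 1 / p), ?_⟩
    rintro y ⟨z, hz, rfl⟩
    calc g z ≤ 2 ^ (1 - 1 / p) * f z := hpt2 z hz
      _ ≤ 2 ^ (1 - 1 / p) * 1 := by
          exact mul_le_mul_of_nonneg_left (hf1 z hz) (by positivity)
      _ = 2 ^ (1 - 1 / p) := mul_one _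
  constructor
  · apply csSup_le (hF.image f)
    rintro y ⟨z, hz, rfl⟩
    exact (hpt1 z hz).trans (le_csSup hbddg ⟨z, hz, rfl⟩)
  · apply csSup_le (hF.image g)
    rintro y ⟨z, hz, rfl⟩
    calc g z ≤ 2 ^ (1 - 1 / p) * f z := hpt2 z hz
      _ ≤ 2 ^ (1 - 1 / p) * triRatio G z1 z2 :=
        mul_le_mul_of_nonneg_left (le_csSup hbddf ⟨z, hz, rfl⟩) (by positivity)
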